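/- With V(s) = ‖s‖ on ℝᵐ, the closed-loop system ṡ = u + Δ(x,t), where u = -(1/((1-ρ₂)ρ₁))·(κ(‖s‖)^{ρ₂}/κ'(‖s‖))·s/‖s‖ - ρ₃·s/(‖s‖ + ρ₄) and ‖Δ(x,t)‖ ≤ δ with ρ₃ > δ ≥ 0, ρ₄ ≥ 0, ρ₁ > 0, 0 ≤ ρ₂ < 1, and κ a class K¹ function differentiable on (0,∞), satisfies along its solutions d/dt V(s(t)) ≤ -(1/((1-ρ₂)ρ₁))·κ(V(s))^{ρ₂}/κ'(V(s)) whenever ‖s(t)‖ ≥ δρ₄/(ρ₃ - δ). -/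

import Mathlib

def IsClassK1 (kappa : ℝ → ℝ) : Prop :=
  ContinuousOn kappa (Set.Ici 0) ∧ StrictMonoOn kappa (Set.Ici 0) ∧ kappa 0 = 0 ∧
    Filter.Tendsto kappa Filter.atTop (nhds 1) ∧
    ∀ r ∈ Set.Ici (0 : ℝ), kappa r ∈ Set.Ico (0 : ℝ) 1

/- Along solutions of the closed loop ṡ = u + Δ with the controller
u = -(1/((1-ρ₂)ρ₁)) (κ(‖s‖)^ρ₂/κ'(‖s‖)) s/‖s‖ - ρ₃ s/(‖s‖+ρ₄) and ‖Δ‖ ≤ δ < ρ₃,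
the Lyapunov function V(s) = ‖s‖ satisfies
d/dt ‖s(t)‖ ≤ -(1/((1-ρ₂)ρ₁)) κ(‖s(t)‖)^ρ₂/κ'(‖s(t)‖) whenever ‖s(t)‖ ≥ δρ₄/(ρ₃-δ). -/
theorem closed_loop_lyapunov_decrease {m : ℕ}
    (κ κ' : ℝ → ℝ) (hκ : IsClassK1 κ)
    (hκ' : ∀ r > (0:ℝ), HasDerivAt κ (κ' r) r ∧ 0 < κ' r)
    (ρ₁ ρ₂ ρ₃ ρ₄ δ : ℝ)
    (hρ₁ : 0 < ρ₁) (hρ₂ : 0 ≤ ρ₂) (hρ₂' : ρ₂ < 1)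
    (hδ : 0 ≤ δ) (hρ₃ : δ < ρ₃) (hρ₄ : 0 ≤ ρ₄)
    (s Δ : ℝ → EuclideanSpace ℝ (Fin m))
    (hΔ : ∀ t, ‖Δ t‖ ≤ δ)
    (hs_sol : ∀ t, s t ≠ 0 → HasDerivAt s
      ((-((1 / ((1 - ρ₂) * ρ₁)) * (κ ‖s t‖ ^ ρ₂ / κ' ‖s t‖)) • (‖s t‖⁻¹ • s t)
        - ρ₃ • ((‖s t‖ + ρ₄)⁻¹ • s t)) + Δ t) t) :
    ∀ t, s t ≠ 0 → δ * ρ₄ / (ρ₃ - δ) ≤ ‖s t‖ →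
      ∃ w' : ℝ, HasDerivAt (fun τ => ‖s τ‖) w' t ∧
        w' ≤ -(1 / ((1 - ρ₂) * ρ₁)) * (κ ‖s t‖ ^ ρ₂ / κ' ‖s t‖) := by
  intro t hst hge
  set n : ℝ := ‖s t‖ with hn
  have hn0 : 0 < n := norm_pos_iff.mpr hst
  set c : ℝ := (1 / ((1 - ρ₂) * ρ₁)) * (κ n ^ ρ₂ / κ' n) with hc
  set v : EuclideanSpace ℝ (Fin m) :=
    (-c • (n⁻¹ • s t) - ρ₃ • ((n + ρ₄)⁻¹ • s t)) + Δ t with hv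
  have hderiv : HasDerivAt s v t := hs_sol t hst
  -- derivative of ‖s τ‖² then sqrt
  have hsq : HasDerivAt (fun τ => ‖s τ‖ ^ 2) (2 * inner ℝ (s t) v) t := hderiv.norm_sq
  have hne : n ^ 2 ≠ 0 := pow_ne_zero 2 hn0.ne'
  have hsqrt : HasDerivAt (fun τ => Real.sqrt (‖s τ‖ ^ 2))
      (2 * inner ℝ (s t) v / (2 * Real.sqrt (n ^ 2))) t := hsq.sqrt hne
  have heq : (fun τ => Real.sqrt (‖s τ‖ ^ 2)) = fun τ => ‖s τ‖ := by
    funext τ; exact Real.sqrt_sq (norm_nonneg _)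
  rw [heq, Real.sqrt_sq hn0.le] at hsqrt
  have hw' : 2 * inner ℝ (s t) v / (2 * n) = (inner ℝ (s t) v : ℝ) / n := by
    exact mul_div_mul_left _ _ two_ne_zero
  rw [hw'] at hsqrt
  refine ⟨(inner ℝ (s t) v : ℝ) / n, hsqrt, ?_⟩
  have hself : (inner ℝ (s t) (s t) : ℝ) = n ^ 2 := by
    rw [real_inner_self_eq_norm_sq]
  have hinner : (inner ℝ (s t) v : ℝ)
      = -c * (n⁻¹ * n ^ 2) - ρ₃ * ((n + ρ₄)⁻¹ * n ^ 2) + inner ℝ (s t) (Δ t) := by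
    rw [hv, inner_add_right, inner_sub_right, real_inner_smul_right, real_inner_smul_right,
      real_inner_smul_right, real_inner_smul_right, hself]
  have hnρ₄ : 0 < n + ρ₄ := by linarith
  have hΔb : (inner ℝ (s t) (Δ t) : ℝ) ≤ n * δ :=
    le_trans (real_inner_le_norm _ _) (by
      have := hΔ t
      exact mul_le_mul_of_nonneg_left this hn0.le)
  have hkey : ρ₃ * ((n + ρ₄)⁻¹ * n ^ 2) ≥ n * δ := by
    have h1 : δ * (n + ρ₄) ≤ ρ₃ * n := by
      have h2 : δ * ρ₄ ≤ (ρ₃ - δ) * n := by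
        rw [div_le_iff₀ (by linarith : (0:ℝ) < ρ₃ - δ)] at hge
        linarith [hge]
      nlinarith
    have h3 : (n + ρ₄)⁻¹ * n ^ 2 = n * (n / (n + ρ₄)) := by
      field_simp
    rw [h3]
    rw [ge_iff_le, ← sub_nonneg]
    have : ρ₃ * (n * (n / (n + ρ₄))) - n * δ = n * ((ρ₃ * n - δ * (n + ρ₄)) / (n + ρ₄)) := by
      field_simp
    rw [this]
    have h4 : 0 ≤ ρ₃ * n - δ * (n + ρ₄) := by linarith
    exact mul_nonneg hn0.le (div_nonneg h4 hnρ₄.le)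
  have : (inner ℝ (s t) v : ℝ) ≤ -c * n := by
    rw [hinner]
    have hcn : -c * (n⁻¹ * n ^ 2) = -c * n := by field_simp
    rw [hcn]
    linarith
  calc (inner ℝ (s t) v : ℝ) / n ≤ (-c * n) / n := by gcongr
      _ = -c := by field_simp
      _ = -(1 / ((1 - ρ₂) * ρ₁)) * (κ n ^ ρ₂ / κ' n) := by rw [hc]; ring
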